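/- Normalization of the top-down queue-jumping observation model: let r be a strict partial order on a finite type A with |A| = m ≥ 1, and let p ∈ [0,1]. For an enumeration Y : Fin m ≃ A (written Y_1, …, Y_m), define q_D(Y) = ∏_{j=1}^{m} ( p/(m − j + 1) + (1 − p) · C_{Y_j}(r[{Y_j, …, Y_m}]) / C(r[{Y_j, …, Y_m}]) ), where r[{Y_j, …, Y_m}] is the suborder of r on the suffix set {Y_j, …, Y_m}. Then the sum of q_D(Y) over all m! enumerations Y of A equals 1. -/

import Mathlib

open scoped Classical

/-- `Y` is a linear extension of `r`: for positions `i < j`, the later element is never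
above the earlier one. -/
def IsLinExt {A : Type*} {n : ℕ} (r : A → A → Prop) (Y : Fin n ≃ A) : Prop :=
  ∀ i j : Fin n, i < j → ¬ r (Y j) (Y i)

/-- `C(r)`: the number of linear extensions of `r`. -/
noncomputable def numExt {A : Type*} [Fintype A] (r : A → A → Prop) : ℕ :=
  Nat.card {Y : Fin (Fintype.card A) ≃ A // IsLinExt r Y}

/-- `C_a(r)`: the number of linear extensions of `r` whose first entry is `a`. -/
noncomputable def numExtFirst {A : Type*} [Fintype A] (r : A → A → Prop) (a : A) : ℕ :=
  Nat.card {Y : Fin (Fintype.card A) ≃ A //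
    IsLinExt r Y ∧ ∀ i : Fin (Fintype.card A), (i : ℕ) = 0 → Y i = a}

/-- The suborder `r[O]`: the restriction of `r` to the subset `O`. -/
def subrel {A : Type*} (r : A → A → Prop) (O : Set A) : O → O → Prop :=
  fun x y => r (x : A) (y : A)

section helpers

lemma exists_linExt {A : Type*} [Fintype A] (r : A → A → Prop)
    (hirr : Irreflexive r) (htrans : Transitive r) :
    ∃ Y : Fin (Fintype.card A) ≃ A, IsLinExt r Y := by
  classical
  let r' : A → A → Prop := fun x y => r x y ∨ x = y
  haveI hpo : IsPartialOrder A r' := {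
    refl := fun x => Or.inr rfl
    trans := fun x y z hxy hyz => by
      rcases hxy with h | rfl
      · rcases hyz with h' | rfl
        · exact Or.inl (htrans h h')
        · exact Or.inl h
      · exact hyz
    antisymm := fun x y hxy hyx => by
      rcases hxy with h | rfl
      · rcases hyx with h' | rfl
        · exact absurd (htrans h h') (hirr x)
        · rfl
      · rfl }
  obtain ⟨s, hs, hrs⟩ := extend_partialOrder r'
  haveI := hs
  letI lo : LinearOrder A := {
    le := s
    lt := fun a b => s a b ∧ ¬ s b a
    le_refl := refl_of s
    le_trans := fun a b c => trans_of s
    le_antisymm := fun a b => antisymm_of s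
    le_total := total_of s
    lt_iff_le_not_ge := fun _ _ => Iff.rfl
    toDecidableLE := Classical.decRel _ }
  refine ⟨(monoEquivOfFin A rfl).toEquiv, fun i j hij hr => ?_⟩
  have h1 : (monoEquivOfFin A rfl) i < (monoEquivOfFin A rfl) j :=
    (monoEquivOfFin A rfl).strictMono hij
  exact h1.2 (hrs _ _ (Or.inl hr))

variable {A₁ A₂ : Type*} [Fintype A₁] [Fintype A₂]

noncomputable def equivCongrFin (e : A₁ ≃ A₂) :
    (Fin (Fintype.card A₁) ≃ A₁) ≃ (Fin (Fintype.card A₂) ≃ A₂) :=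
  Equiv.equivCongr (finCongr (Fintype.card_congr e)) e

lemma isLinExt_congr (e : A₁ ≃ A₂) (r₁ : A₁ → A₁ → Prop) (r₂ : A₂ → A₂ → Prop)
    (h : ∀ x y, r₁ x y ↔ r₂ (e x) (e y)) (Y : Fin (Fintype.card A₁) ≃ A₁) :
    IsLinExt r₁ Y ↔ IsLinExt r₂ (equivCongrFin e Y) := by
  constructor
  · intro hY i j hij hr
    refine hY ((finCongr (Fintype.card_congr e)).symm i)
      ((finCongr (Fintype.card_congr e)).symm j) hij ?_
    exact (h _ _).mpr hr
  · intro hY i j hij hr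
    refine hY (finCongr (Fintype.card_congr e) i) (finCongr (Fintype.card_congr e) j) hij
      ((h _ _).mp ?_)
    simpa [equivCongrFin] using hr

lemma numExt_congr (e : A₁ ≃ A₂) (r₁ : A₁ → A₁ → Prop) (r₂ : A₂ → A₂ → Prop)
    (h : ∀ x y, r₁ x y ↔ r₂ (e x) (e y)) : numExt r₁ = numExt r₂ :=
  Nat.card_congr <| Equiv.subtypeEquiv (equivCongrFin e) (fun Y => isLinExt_congr e r₁ r₂ h Y)

lemma numExtFirst_congr (e : A₁ ≃ A₂) (r₁ : A₁ → A₁ → Prop) (r₂ : A₂ → A₂ → Prop)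
    (h : ∀ x y, r₁ x y ↔ r₂ (e x) (e y)) (a : A₁) :
    numExtFirst r₁ a = numExtFirst r₂ (e a) := by
  apply Nat.card_congr
  refine Equiv.subtypeEquiv (equivCongrFin e) (fun Y => ?_)
  rw [← isLinExt_congr e r₁ r₂ h Y]
  refine and_congr_right fun _ => ?_
  constructor
  · intro hY i hi
    simp only [equivCongrFin, Equiv.equivCongr_apply_apply]
    exact congrArg e (hY _ (by simpa using hi))
  · intro hY i hi
    have := hY (finCongr (Fintype.card_congr e) i) (by simpa using hi)
    simp only [equivCongrFin, Equiv.equivCongr_apply_apply, finCongr_symm_apply_coe] at this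
    exact e.injective (by simpa [equivCongrFin] using this)

lemma sum_numExtFirst {A : Type*} [Fintype A] (r : A → A → Prop) (hpos : 0 < Fintype.card A) :
    ∑ a : A, numExtFirst r a = numExt r := by
  classical
  set i0 : Fin (Fintype.card A) := ⟨0, hpos⟩ with hi0
  have hcond : ∀ (Y : Fin (Fintype.card A) ≃ A) (a : A),
      (IsLinExt r Y ∧ ∀ i : Fin (Fintype.card A), (i : ℕ) = 0 → Y i = a) ↔
        (IsLinExt r Y ∧ Y i0 = a) := by
    intro Y a
    refine and_congr_right fun _ => ⟨fun h => h i0 rfl, fun h i hi => ?_⟩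
    rwa [show i = i0 from Fin.ext hi]
  simp only [numExtFirst, numExt, Nat.card_eq_fintype_card]
  simp_rw [Fintype.card_subtype]
  conv_rhs => rw [Finset.card_eq_sum_card_fiberwise
    (f := fun Y : Fin (Fintype.card A) ≃ A => Y i0) (t := Finset.univ)
    (fun Y _ => Finset.mem_univ (Y i0))]
  refine Finset.sum_congr rfl fun a _ => ?_
  rw [Finset.filter_filter]
  exact Finset.card_bij (fun Y _ => Y) (by simp_all [hcond]) (by simp)
    (by intro b hb; exact ⟨b, by simp_all [hcond], rfl⟩)

def mkEnum {B : Type*} [DecidableEq B] {n : ℕ} (a : B) (Z : Fin n ≃ {x : B // x ≠ a}) :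
    Fin (n + 1) ≃ B :=
  (finSuccEquiv n).trans (Z.optionCongr.trans (Equiv.optionSubtypeNe a))

@[simp] lemma mkEnum_zero {B : Type*} [DecidableEq B] {n : ℕ} (a : B)
    (Z : Fin n ≃ {x : B // x ≠ a}) : mkEnum a Z 0 = a := by
  simp [mkEnum, finSuccEquiv_zero]

@[simp] lemma mkEnum_succ {B : Type*} [DecidableEq B] {n : ℕ} (a : B)
    (Z : Fin n ≃ {x : B // x ≠ a}) (i : Fin n) : mkEnum a Z i.succ = (Z i : B) := by
  simp [mkEnum, finSuccEquiv_succ]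

lemma mkEnum_bijective {B : Type*} [Fintype B] [DecidableEq B] {n : ℕ}
    (hcard : Fintype.card B = n + 1) :
    Function.Bijective (fun x : Σ a : B, (Fin n ≃ {b : B // b ≠ a}) => mkEnum x.1 x.2) := by
  constructor
  · rintro ⟨a, Z⟩ ⟨a', Z'⟩ h
    simp only at h
    obtain rfl : a = a' := by
      have := congrArg (fun Y : Fin (n+1) ≃ B => Y 0) h
      simpa using this
    have : Z = Z' := by
      ext i
      have := congrArg (fun Y : Fin (n+1) ≃ B => Y i.succ) h
      simpa [Subtype.ext_iff] using this
    rw [this]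
  · intro Y
    set a := Y 0 with ha
    have hne : ∀ i : Fin n, Y i.succ ≠ a := by
      intro i h
      exact (Fin.succ_ne_zero i) (Y.injective h)
    let f : Fin n → {x : B // x ≠ a} := fun i => ⟨Y i.succ, hne i⟩
    have hfinj : Function.Injective f := by
      intro i j hij
      exact Fin.succ_injective _ (Y.injective (congrArg Subtype.val hij))
    have hcard' : Fintype.card {x : B // x ≠ a} = n := by
      rw [Fintype.card_subtype_compl, hcard, Fintype.card_subtype_eq]; omega
    have hfbij : Function.Bijective f :=
      (Fintype.bijective_iff_injective_and_card f).mpr ⟨hfinj, by rw [hcard', Fintype.card_fin]⟩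
    refine ⟨⟨a, Equiv.ofBijective f hfbij⟩, ?_⟩
    ext i
    refine Fin.cases ?_ ?_ i
    · simp [ha]
    · intro k
      simp [Equiv.ofBijective_apply, f]

end helpers

universe u

lemma main_sum (p : ℝ) : ∀ (n : ℕ) (B : Type u) [Fintype B] [DecidableEq B],
    Fintype.card B = n → ∀ (r : B → B → Prop), Irreflexive r → Transitive r →
    ∑ Y : Fin n ≃ B, ∏ j : Fin n,
      (p / ((n - (j : ℕ) : ℕ) : ℝ) +
        (1 - p) *
          ((numExtFirst (subrel r {a : B | ∃ i : Fin n, j ≤ i ∧ Y i = a})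
              ⟨Y j, ⟨j, le_refl j, rfl⟩⟩ : ℕ) : ℝ) /
            ((numExt (subrel r {a : B | ∃ i : Fin n, j ≤ i ∧ Y i = a}) : ℕ) : ℝ)) = 1 := by
  intro n
  induction n with
  | zero =>
    intro B _ _ hc r _ _
    simp only [Finset.univ_eq_empty (α := Fin 0), Finset.prod_empty]
    rw [Finset.sum_const, Finset.card_univ,
      Fintype.card_equiv ((Fintype.equivFinOfCardEq hc).symm)]
    simp
  | succ n ih =>
    intro B _ _ hc r hirr htrans
    classical
    -- positivity of numExt r
    have hpos : 0 < numExt r := by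
      obtain ⟨Y0, hY0⟩ := exists_linExt r hirr htrans
      haveI : Nonempty {Y : Fin (Fintype.card B) ≃ B // IsLinExt r Y} := ⟨⟨Y0, hY0⟩⟩
      unfold numExt
      exact Nat.card_pos
    -- the key per-term factorization
    have key : ∀ (a : B) (Z : Fin n ≃ {x : B // x ≠ a}),
        (∏ j : Fin (n + 1),
          (p / ((n + 1 - (j : ℕ) : ℕ) : ℝ) +
            (1 - p) *
              ((numExtFirst (subrel r {x : B | ∃ i : Fin (n + 1), j ≤ i ∧ mkEnum a Z i = x})
                  ⟨mkEnum a Z j, ⟨j, le_refl j, rfl⟩⟩ : ℕ) : ℝ) /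
                ((numExt (subrel r {x : B | ∃ i : Fin (n + 1), j ≤ i ∧ mkEnum a Z i = x}) : ℕ) :
                  ℝ))) =
        (p / ((n + 1 : ℕ) : ℝ) +
            (1 - p) * ((numExtFirst r a : ℕ) : ℝ) / ((numExt r : ℕ) : ℝ)) *
        ∏ j : Fin n,
          (p / ((n - (j : ℕ) : ℕ) : ℝ) +
            (1 - p) *
              ((numExtFirst (subrel (fun x y : {x : B // x ≠ a} => r x.1 y.1)
                    {b : {x : B // x ≠ a} | ∃ i : Fin n, j ≤ i ∧ Z i = b})
                  ⟨Z j, ⟨j, le_refl j, rfl⟩⟩ : ℕ) : ℝ) /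
                ((numExt (subrel (fun x y : {x : B // x ≠ a} => r x.1 y.1)
                    {b : {x : B // x ≠ a} | ∃ i : Fin n, j ≤ i ∧ Z i = b}) : ℕ) : ℝ)) := by
      intro a Z
      rw [Fin.prod_univ_succ]
      congr 1
      · -- first factor
        have hS₀ : ∀ x : B,
            x ∈ {x : B | ∃ i : Fin (n + 1), (0 : Fin (n + 1)) ≤ i ∧ mkEnum a Z i = x} :=
          fun x => ⟨(mkEnum a Z).symm x, Fin.zero_le _, Equiv.apply_symm_apply _ _⟩
        have e1 : numExt (subrel r {x : B | ∃ i : Fin (n + 1), (0 : Fin (n+1)) ≤ i ∧ mkEnum a Z i = x})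
            = numExt r :=
          numExt_congr (Equiv.subtypeUnivEquiv hS₀) _ _ (fun _ _ => Iff.rfl)
        have e2 : numExtFirst
            (subrel r {x : B | ∃ i : Fin (n + 1), (0 : Fin (n+1)) ≤ i ∧ mkEnum a Z i = x})
            ⟨mkEnum a Z 0, ⟨0, le_refl 0, rfl⟩⟩ = numExtFirst r a := by
          rw [numExtFirst_congr (Equiv.subtypeUnivEquiv hS₀)
            (subrel r {x : B | ∃ i : Fin (n + 1), (0 : Fin (n+1)) ≤ i ∧ mkEnum a Z i = x}) r
            (fun _ _ => Iff.rfl) ⟨mkEnum a Z 0, ⟨0, le_refl 0, rfl⟩⟩]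
          exact congrArg (numExtFirst r) (mkEnum_zero a Z)
        rw [e1, e2]
        norm_num
      · -- remaining factors
        refine Finset.prod_congr rfl fun j _ => ?_
        have hset : {x : B | ∃ i : Fin (n + 1), j.succ ≤ i ∧ mkEnum a Z i = x} =
            Subtype.val '' {b : {x : B // x ≠ a} | ∃ i : Fin n, j ≤ i ∧ Z i = b} := by
          ext x
          constructor
          · rintro ⟨i, hji, rfl⟩
            revert hji
            refine Fin.cases ?_ ?_ i
            · intro hji
              exact absurd hji (by simp [Fin.le_def])
            · intro k hjk
              exact ⟨Z k, ⟨k, Fin.succ_le_succ_iff.mp hjk, rfl⟩, (mkEnum_succ a Z k).symm⟩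
          · rintro ⟨⟨x, hxa⟩, ⟨i, hji, hZi⟩, rfl⟩
            exact ⟨i.succ, Fin.succ_le_succ_iff.mpr hji, by rw [mkEnum_succ, hZi]⟩
        let eS : ↥{b : {x : B // x ≠ a} | ∃ i : Fin n, j ≤ i ∧ Z i = b} ≃
            ↥{x : B | ∃ i : Fin (n + 1), j.succ ≤ i ∧ mkEnum a Z i = x} :=
          (Equiv.Set.image Subtype.val _ Subtype.val_injective).trans (Equiv.setCongr hset.symm)
        have hval : ∀ x, ((eS x : ↥{x : B | ∃ i : Fin (n + 1), j.succ ≤ i ∧ mkEnum a Z i = x}) : B)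
            = ((x : {x : B // x ≠ a}) : B) := fun x => rfl
        have hiff : ∀ x y, subrel (fun x y : {x : B // x ≠ a} => r x.1 y.1)
            {b : {x : B // x ≠ a} | ∃ i : Fin n, j ≤ i ∧ Z i = b} x y ↔
            subrel r {x : B | ∃ i : Fin (n + 1), j.succ ≤ i ∧ mkEnum a Z i = x} (eS x) (eS y) :=
          fun x y => by rw [subrel, subrel, hval, hval]
        have e1 : numExt (subrel r {x : B | ∃ i : Fin (n + 1), j.succ ≤ i ∧ mkEnum a Z i = x}) =
            numExt (subrel (fun x y : {x : B // x ≠ a} => r x.1 y.1)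
              {b : {x : B // x ≠ a} | ∃ i : Fin n, j ≤ i ∧ Z i = b}) :=
          (numExt_congr eS _ _ hiff).symm
        have e2 : numExtFirst
            (subrel r {x : B | ∃ i : Fin (n + 1), j.succ ≤ i ∧ mkEnum a Z i = x})
            ⟨mkEnum a Z j.succ, ⟨j.succ, le_refl j.succ, rfl⟩⟩ =
            numExtFirst (subrel (fun x y : {x : B // x ≠ a} => r x.1 y.1)
              {b : {x : B // x ≠ a} | ∃ i : Fin n, j ≤ i ∧ Z i = b})
              ⟨Z j, ⟨j, le_refl j, rfl⟩⟩ := by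
          rw [numExtFirst_congr eS _ _ hiff ⟨Z j, ⟨j, le_refl j, rfl⟩⟩]
          exact congrArg _ (Subtype.ext (by rw [hval]; exact (mkEnum_succ a Z j).symm)).symm
        have hnum : ((n + 1 - ((j.succ : Fin (n + 1)) : ℕ) : ℕ) : ℝ) = ((n - (j : ℕ) : ℕ) : ℝ) := by
          rw [Fin.val_succ]
          norm_num
        rw [e1, e2, hnum]
    -- decompose the sum
    rw [← Equiv.sum_comp (Equiv.ofBijective _ (mkEnum_bijective hc))]
    rw [← Finset.univ_sigma_univ, Finset.sum_sigma]
    simp only [Equiv.ofBijective_apply]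
    refine (Finset.sum_congr rfl fun a _ => Finset.sum_congr rfl fun Z _ => key a Z).trans ?_
    have hih : ∀ a : B,
        ∑ Z : Fin n ≃ {x : B // x ≠ a}, ∏ j : Fin n,
          (p / ((n - (j : ℕ) : ℕ) : ℝ) +
            (1 - p) *
              ((numExtFirst (subrel (fun x y : {x : B // x ≠ a} => r x.1 y.1)
                    {b : {x : B // x ≠ a} | ∃ i : Fin n, j ≤ i ∧ Z i = b})
                  ⟨Z j, ⟨j, le_refl j, rfl⟩⟩ : ℕ) : ℝ) /
                ((numExt (subrel (fun x y : {x : B // x ≠ a} => r x.1 y.1)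
                    {b : {x : B // x ≠ a} | ∃ i : Fin n, j ≤ i ∧ Z i = b}) : ℕ) : ℝ)) = 1 := by
      intro a
      have hcard' : Fintype.card {x : B // x ≠ a} = n := by
        rw [Fintype.card_subtype_compl, hc, Fintype.card_subtype_eq]; omega
      exact ih {x : B // x ≠ a} hcard' (fun x y => r x.1 y.1)
        (fun x h => hirr x.1 h) (fun x y z hxy hyz => htrans hxy hyz)
    simp_rw [← Finset.mul_sum, hih, mul_one]
    -- final sum over a
    have hsum : ∑ a : B, ((numExtFirst r a : ℕ) : ℝ) = ((numExt r : ℕ) : ℝ) := by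
      rw [← Nat.cast_sum]
      exact_mod_cast congrArg Nat.cast (sum_numExtFirst r (by rw [hc]; omega))
    have hC : ((numExt r : ℕ) : ℝ) ≠ 0 := Nat.cast_ne_zero.mpr hpos.ne'
    have hn1 : ((n + 1 : ℕ) : ℝ) ≠ 0 := by positivity
    rw [Finset.sum_add_distrib, Finset.sum_const, Finset.card_univ, hc]
    simp_rw [mul_div_assoc]
    rw [← Finset.mul_sum, ← Finset.sum_div, hsum, div_self hC, mul_one, nsmul_eq_mul]
    push_cast
    field_simp
    ring


/-- Normalization of the top-down queue-jumping observation model: the probabilities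
`q_D(Y)` sum to `1` over all `m!` enumerations `Y` of `A`. -/
theorem stmt7 {A : Type*} [Fintype A] [DecidableEq A] (m : ℕ) (hm : 1 ≤ m)
    (hcard : Fintype.card A = m)
    (r : A → A → Prop) (hirr : Irreflexive r) (htrans : Transitive r)
    (p : ℝ) (hp0 : 0 ≤ p) (hp1 : p ≤ 1) :
    ∑ Y : Fin m ≃ A, ∏ j : Fin m,
      (p / ((m - (j : ℕ) : ℕ) : ℝ) +
        (1 - p) *
          ((numExtFirst (subrel r {a : A | ∃ i : Fin m, j ≤ i ∧ Y i = a})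
              ⟨Y j, ⟨j, le_refl j, rfl⟩⟩ : ℕ) : ℝ) /
            ((numExt (subrel r {a : A | ∃ i : Fin m, j ≤ i ∧ Y i = a}) : ℕ) : ℝ)) = 1 := by
  exact main_sum p m A hcard r hirr htrans
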